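/- For all integers n, k, i with 1 ≤ k ≤ n and 0 ≤ i ≤ k−1, the number of ordered set partitions (B_1,…,B_k) of [n] = {1,…,n} into k nonempty blocks such that exactly i indices j satisfy min(B_j) > min(B_l) for some l > j equals S(n,k) · c(k, k−i), where S denotes the Stirling number of the second kind and c denotes the unsigned Stirling number of the first kind. -/

import Mathlib

open Finset

/-- The number of cycles (including fixed points) of a permutation of `Fin n`. -/
noncomputable def cycleCount {n : ℕ} (σ : Equiv.Perm (Fin n)) : ℕ :=
  σ.cycleType.card + (Finset.univ.filter fun x => σ x = x).card

/-- The unsigned Stirling number of the first kind `c(n,k)`: the number of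
permutations of an `n`-element set with exactly `k` cycles. -/
noncomputable def stirlingFirst (n k : ℕ) : ℕ :=
  Set.ncard {σ : Equiv.Perm (Fin n) | cycleCount σ = k}

/-- The signed Stirling number of the first kind `s(n,k) = (-1)^(n-k) c(n,k)`. -/
noncomputable def stirlingFirstSigned (n k : ℕ) : ℤ :=
  (-1) ^ (n - k) * (stirlingFirst n k : ℤ)

/-- `P` is an (unordered) partition of `Fin n` into nonempty blocks. -/
def IsPartitionOf (n : ℕ) (P : Finset (Finset (Fin n))) : Prop :=
  (∀ b ∈ P, b.Nonempty) ∧ (∀ b ∈ P, ∀ c ∈ P, b ≠ c → Disjoint b c) ∧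
    ∀ x : Fin n, ∃ b ∈ P, x ∈ b

/-- The Stirling number of the second kind `S(n,k)`: the number of partitions of an
`n`-element set into exactly `k` nonempty blocks. -/
noncomputable def stirlingSecond (n k : ℕ) : ℕ :=
  Set.ncard {P : Finset (Finset (Fin n)) | IsPartitionOf n P ∧ P.card = k}

/-- The Bell number `B n`: the number of partitions of an `n`-element set into
nonempty blocks. -/
noncomputable def bell (n : ℕ) : ℕ :=
  Set.ncard {P : Finset (Finset (Fin n)) | IsPartitionOf n P}

/-- The statistic `nse` of a list: the number of positions `j` such that some later
entry is smaller than the entry at position `j`. -/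
def nseList {α : Type*} [LinearOrder α] : List α → ℕ
  | [] => 0
  | a :: w => (if ∃ b ∈ w, b < a then 1 else 0) + nseList w

/-- `B` is an ordered set partition ("list of sets") of `Fin n` into `k` pairwise
disjoint nonempty blocks. -/
def IsOrderedSetPartition (n k : ℕ) (B : Fin k → Finset (Fin n)) : Prop :=
  (∀ j, (B j).Nonempty) ∧ (∀ j l, j ≠ l → Disjoint (B j) (B l)) ∧
    ∀ x : Fin n, ∃ j, x ∈ B j

/-- The statistic `nsb` of an ordered set partition: the number of indices `j`
such that `min (B j) > min (B l)` for some `l > j`. -/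
def nsbOSP {n k : ℕ} (B : Fin k → Finset (Fin n)) : ℕ :=
  (Finset.univ.filter fun j : Fin k => ∃ l, j < l ∧ (B l).min < (B j).min).card

/-- `P` is a "set of lists" partition of `Fin n`: an unordered collection of nonempty
sequences of distinct elements, with pairwise disjoint underlying sets covering `Fin n`. -/
def IsSetOfLists (n : ℕ) (P : Finset (List (Fin n))) : Prop :=
  (∀ w ∈ P, w ≠ []) ∧ (∀ w ∈ P, w.Nodup) ∧
    (∀ w ∈ P, ∀ u ∈ P, w ≠ u → ∀ x ∈ w, x ∉ u) ∧
    ∀ x : Fin n, ∃ w ∈ P, x ∈ w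

/-- The statistic `nse` of a set of lists: the sum of `nseList` over its blocks. -/
def nseSL {n : ℕ} (P : Finset (List (Fin n))) : ℕ := ∑ w ∈ P, nseList w

/-- `L` is a "list of lists" partition of `Fin n` into `k` blocks: a sequence of `k`
nonempty sequences of distinct elements, with pairwise disjoint underlying sets
covering `Fin n`. -/
def IsListOfLists (n k : ℕ) (L : Fin k → List (Fin n)) : Prop :=
  (∀ j, L j ≠ []) ∧ (∀ j, (L j).Nodup) ∧
    (∀ j l, j ≠ l → ∀ x ∈ L j, x ∉ L l) ∧
    ∀ x : Fin n, ∃ j, x ∈ L j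

/-- The statistic `nse` of a list of lists: the sum of `nseList` over its blocks. -/
def nseLL {n k : ℕ} (L : Fin k → List (Fin n)) : ℕ := ∑ j, nseList (L j)

/-- The statistic `nsb` of a list of lists: the number of indices `j` such that
`min (L j) > min (L l)` for some `l > j`. -/
def nsbLL {n k : ℕ} (L : Fin k → List (Fin n)) : ℕ :=
  (Finset.univ.filter fun j : Fin k => ∃ l, j < l ∧ (L l).minimum < (L j).minimum).card


section Aux
open Equiv Equiv.Perm
variable {α : Type*} [Fintype α] [DecidableEq α]
set_option linter.unusedSectionVars false

variable {α : Type*} [Fintype α] [DecidableEq α]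
set_option linter.unusedSectionVars false

lemma pow_fixed {τ : Equiv.Perm α} {a : α} (h : τ a = a) : ∀ i : ℕ, (τ ^ i) a = a := by
  intro i; induction i with
  | zero => simp
  | succ i ih => rw [pow_succ, Equiv.Perm.mul_apply, h, ih]

lemma isCycle_swap_mul_cycle {c : Equiv.Perm α} (hc : c.IsCycle) {a b : α}
    (ha : c a = a) (hb : b ≠ a) (hcb : c b ≠ b) : Equiv.Perm.IsCycle (Equiv.swap a b * c) ∧
      (Equiv.swap a b * c).support = insert a c.support := by
  set g := Equiv.swap a b * c with hg
  have hga : g a = b := by simp [hg, Equiv.Perm.mul_apply, ha]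
  have hia : c⁻¹ a = a := by rw [Equiv.Perm.inv_eq_iff_eq, ha]
  have hcyc_a_ne : ∀ x, c x = a → x = a := fun x hx => by
    have : x = c⁻¹ a := by rw [← hx]; simp
    rw [this, hia]
  have hgval : ∀ x, x ≠ a → c x ≠ b → g x = c x := by
    intro x hxa hxb
    have : c x ≠ a := fun h => hxa (hcyc_a_ne x h)
    simp [hg, Equiv.Perm.mul_apply, Equiv.swap_apply_of_ne_of_ne this hxb]
  have key : ∀ i : ℕ, Equiv.Perm.SameCycle g a ((c ^ i) b) := by
    intro i; induction i with
    | zero => exact ⟨1, by simpa using hga⟩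
    | succ i ih =>
      rw [pow_succ', Equiv.Perm.mul_apply]
      set z := (c ^ i) b with hz
      by_cases hzb : c z = b
      · rw [hzb]; exact ⟨1, by simpa using hga⟩
      · have hza : z ≠ a := by
          intro h
          have : b = (c⁻¹ ^ i) a := by
            rw [← h, hz, ← Equiv.Perm.mul_apply, inv_pow, inv_mul_cancel]; simp
          exact hb (by rw [this, pow_fixed hia])
        have : g z = c z := hgval z hza hzb
        exact ih.trans ⟨1, by simpa using this⟩
  constructor
  · refine ⟨a, by rw [hga]; exact hb, fun y hy => ?_⟩
    by_cases hya : y = a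
    · rw [hya]
    by_cases hyb : y = b
    · rw [hyb]; exact ⟨1, by simpa using hga⟩
    have hcy : c y ≠ y := by
      intro h
      exact hy (by rw [hgval y hya (h.symm ▸ hyb), h])
    obtain ⟨i, hi⟩ := hc.exists_pow_eq hcb hcy
    exact hi ▸ key i
  · ext x
    simp only [Equiv.Perm.mem_support, Finset.mem_insert]
    by_cases hxa : x = a
    · subst hxa; simp [hga, hb]
    by_cases hxb : c x = b
    · have hgx : g x = a := by simp [hg, Equiv.Perm.mul_apply, hxb]
      have hbx : b ≠ x := fun h => hcb (by rw [h, hxb, h])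
      rw [hgx]
      exact ⟨fun _ => Or.inr (hxb ▸ hbx), fun _ => Ne.symm hxa⟩
    · rw [hgval x hxa hxb]
      simp [Equiv.Perm.mem_support, hxa]

noncomputable def ccount (τ : Equiv.Perm α) : ℕ :=
  Multiset.card τ.cycleType + (Finset.univ.filter fun x => τ x = x).card

lemma ccount_swap_mul {τ : Equiv.Perm α} {a b : α} (ha : τ a = a) (hb : b ≠ a) :
    ccount (Equiv.swap a b * τ) + 1 = ccount τ := by
  set g := Equiv.swap a b * τ with hg
  have hτba : τ b ≠ a := fun h => hb (τ.injective (by rw [h, ha]))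
  have hfix : ∀ x, (g x = x) ↔ (τ x = x ∧ x ≠ a ∧ x ≠ b) := by
    intro x
    by_cases hxa : x = a
    · subst hxa
      simp [hg, Equiv.Perm.mul_apply, ha, hb]
    by_cases hxb : x = b
    · subst hxb
      simp only [hg, Equiv.Perm.mul_apply, ne_eq, not_true_eq_false, and_false, iff_false]
      intro h
      by_cases h2 : τ x = x
      · rw [h2, Equiv.swap_apply_right] at h; exact hb h.symm
      · rcases eq_or_ne (τ x) a with h3 | h3
        · exact hτba h3
        · rw [Equiv.swap_apply_of_ne_of_ne h3 h2] at h; exact h2 h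
    · have hτxa : τ x ≠ a := fun h => hxa (τ.injective (h.trans ha.symm))
      by_cases hτxb : τ x = b
      · simp only [hg, Equiv.Perm.mul_apply, hτxb, Equiv.swap_apply_right]
        constructor
        · intro h; exact absurd h.symm hxa
        · rintro ⟨h1, -⟩; exact absurd (hτxb ▸ h1.symm) hxb
      · simp [hg, Equiv.Perm.mul_apply, Equiv.swap_apply_of_ne_of_ne hτxa hτxb, hxa, hxb]
  set Fg := (Finset.univ.filter fun x => g x = x) with hFg
  set Ft := (Finset.univ.filter fun x => τ x = x) with hFt
  have hmemF : ∀ x, x ∈ Fg ↔ (x ∈ Ft ∧ x ≠ a ∧ x ≠ b) := by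
    intro x; simp [hFg, hFt, Finset.mem_filter, hfix x]
  have haFt : a ∈ Ft := by simp [hFt, ha]
  by_cases hbτ : τ b = b
  · -- disjoint case
    have hFcard : Ft.card = Fg.card + 2 := by
      have : Fg = (Ft.erase a).erase b := by
        ext x; simp only [Finset.mem_erase, hmemF x]; tauto
      rw [this, Finset.card_erase_of_mem, Finset.card_erase_of_mem haFt]
      · have h2 : 2 ≤ Ft.card := Finset.one_lt_card.mpr ⟨a, haFt, b, by simp [hFt, hbτ], hb.symm⟩
        omega
      · exact Finset.mem_erase.mpr ⟨hb, by simp [hFt, hbτ]⟩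
    have hdisj : Equiv.Perm.Disjoint (Equiv.swap a b) τ := by
      intro x
      by_cases hxa : x = a
      · right; rw [hxa, ha]
      by_cases hxb : x = b
      · right; rw [hxb, hbτ]
      · left; exact Equiv.swap_apply_of_ne_of_ne hxa hxb
    have hct : Multiset.card g.cycleType = Multiset.card τ.cycleType + 1 := by
      rw [hg, Equiv.Perm.Disjoint.cycleType_mul hdisj, (Equiv.Perm.isCycle_swap hb.symm).cycleType]
      simp [add_comm]
    simp only [ccount, hct, ← hFg, ← hFt]
    omega
  · -- merge case
    have hFcard : Ft.card = Fg.card + 1 := by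
      have : Fg = Ft.erase a := by
        ext x
        simp only [Finset.mem_erase, hmemF x]
        constructor
        · tauto
        · rintro ⟨hxa, hxF⟩
          refine ⟨hxF, hxa, fun hxb => hbτ ?_⟩
          subst hxb; exact (Finset.mem_filter.mp hxF).2
      rw [this, Finset.card_erase_of_mem haFt]
      have : 1 ≤ Ft.card := Finset.card_pos.mpr ⟨a, haFt⟩
      omega
    -- cycle type analysis
    set c := τ.cycleOf b with hc
    have hcmem : c ∈ τ.cycleFactorsFinset := Equiv.Perm.cycleOf_mem_cycleFactorsFinset_iff.mpr (Equiv.Perm.mem_support.mpr hbτ)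
    have hccyc : c.IsCycle := Equiv.Perm.isCycle_cycleOf τ hbτ
    have hcb : c b = τ b := Equiv.Perm.cycleOf_apply_self τ b
    have hca : c a = a := by
      rw [hc, Equiv.Perm.cycleOf_apply]
      split <;> simp [ha]
    set ρ := τ * c⁻¹ with hρ
    have hdisj : Equiv.Perm.Disjoint ρ c :=
      Equiv.Perm.disjoint_mul_inv_of_mem_cycleFactorsFinset hcmem
    have hτeq : ρ * c = τ := by rw [hρ]; group
    have hρa : ρ a = a := by
      rw [hρ, Equiv.Perm.mul_apply]
      have : c⁻¹ a = a := by rw [Equiv.Perm.inv_eq_iff_eq, hca]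
      rw [this, ha]
    have hρb : ρ b = b := by
      rcases hdisj b with h | h
      · exact h
      · exact absurd (hcb ▸ h) hbτ
    obtain ⟨hgcyc, hgsupp⟩ := isCycle_swap_mul_cycle hccyc hca hb (hcb ▸ hbτ)
    have hcomm : Equiv.swap a b * ρ = ρ * Equiv.swap a b := by
      have : Equiv.Perm.Disjoint (Equiv.swap a b) ρ := by
        intro x
        by_cases hxa : x = a
        · right; rw [hxa, hρa]
        by_cases hxb : x = b
        · right; rw [hxb, hρb]
        · left; exact Equiv.swap_apply_of_ne_of_ne hxa hxb
      exact this.commute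
    have hgeq : g = ρ * (Equiv.swap a b * c) := by
      rw [hg, ← hτeq, ← mul_assoc, hcomm, mul_assoc]
    have hdisj2 : Equiv.Perm.Disjoint ρ (Equiv.swap a b * c) := by
      intro x
      by_cases hρx : ρ x = x
      · left; exact hρx
      · right
        have hcx : c x = x := (hdisj x).resolve_left hρx
        have hxa : x ≠ a := fun hh => hρx (hh ▸ hρa)
        have hxb : x ≠ b := fun hh => hρx (hh ▸ hρb)
        simp [Equiv.Perm.mul_apply, hcx, Equiv.swap_apply_of_ne_of_ne hxa hxb]
    have hct : Multiset.card g.cycleType = Multiset.card τ.cycleType := by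
      rw [hgeq, Equiv.Perm.Disjoint.cycleType_mul hdisj2, ← hτeq, Equiv.Perm.Disjoint.cycleType_mul hdisj, hgcyc.cycleType, hccyc.cycleType]
      simp
    simp only [ccount, hct, ← hFg, ← hFt]
    omega

/-- embedding Fin k into nonzero elements of Fin (k+1) -/
def finSuccNZ (k : ℕ) : Fin k ≃ {x : Fin (k + 1) // x ≠ 0} where
  toFun x := ⟨x.succ, Fin.succ_ne_zero x⟩
  invFun y := y.1.pred y.2
  left_inv x := by simp
  right_inv y := by simp

lemma ccount_decompose_zero {k : ℕ} (e : Equiv.Perm (Fin k)) :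
    ccount (Equiv.Perm.decomposeFin.symm (0, e)) = ccount e + 1 := by
  set τ := Equiv.Perm.decomposeFin.symm (0, e) with hτ
  have hτ0 : τ 0 = 0 := Equiv.Perm.decomposeFin_symm_apply_zero 0 e
  have hτs : ∀ x : Fin k, τ x.succ = (e x).succ := by
    intro x
    rw [hτ, Equiv.Perm.decomposeFin_symm_apply_succ, Equiv.swap_self]
    rfl
  have hext : τ = e.extendDomain (finSuccNZ k) := by
    apply Equiv.ext
    intro x
    refine Fin.cases ?_ ?_ x
    · rw [hτ0, Equiv.Perm.extendDomain_apply_not_subtype]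
      simp
    · intro y
      rw [hτs]
      symm
      have h2 := Equiv.Perm.extendDomain_apply_subtype e (finSuccNZ k) (Fin.succ_ne_zero y)
      rw [h2]
      have : (finSuccNZ k).symm ⟨y.succ, Fin.succ_ne_zero y⟩ = y := by
        simp [finSuccNZ]
      rw [this]
      rfl
  have hct : τ.cycleType = e.cycleType := by
    rw [hext, Equiv.Perm.cycleType_extendDomain]
  have hfix : (Finset.univ.filter fun x => τ x = x).card =
      (Finset.univ.filter fun x => e x = x).card + 1 := by
    rw [Finset.card_filter, Finset.card_filter, Fin.sum_univ_succ]
    simp only [hτ0, if_pos rfl, hτs]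
    rw [add_comm]
    congr 1
    apply Finset.sum_congr rfl
    intro x _
    congr 1
    simp [Fin.succ_inj]
  simp only [ccount, hct, hfix]
  omega

lemma ccount_decompose {k : ℕ} (p : Fin (k + 1)) (e : Equiv.Perm (Fin k)) :
    ccount (Equiv.Perm.decomposeFin.symm (p, e)) = ccount e + (if p = 0 then 1 else 0) := by
  by_cases hp : p = 0
  · rw [hp, ccount_decompose_zero]; simp
  · have heq : Equiv.Perm.decomposeFin.symm (p, e) =
        Equiv.swap 0 p * Equiv.Perm.decomposeFin.symm (0, e) := by
      apply Equiv.ext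
      intro x
      refine Fin.cases ?_ ?_ x
      · rw [Equiv.Perm.decomposeFin_symm_apply_zero, Equiv.Perm.mul_apply,
          Equiv.Perm.decomposeFin_symm_apply_zero, Equiv.swap_apply_left]
      · intro y
        rw [Equiv.Perm.decomposeFin_symm_apply_succ, Equiv.Perm.mul_apply,
          Equiv.Perm.decomposeFin_symm_apply_succ, Equiv.swap_self]
        rfl
    have h0 : (Equiv.Perm.decomposeFin.symm (0, e)) 0 = 0 :=
      Equiv.Perm.decomposeFin_symm_apply_zero 0 e
    have := ccount_swap_mul (τ := Equiv.Perm.decomposeFin.symm (0, e)) (a := 0) (b := p) h0 hp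
    rw [heq, if_neg hp, add_zero]
    rw [ccount_decompose_zero] at this
    omega

lemma cp_succ (k m : ℕ) :
    (Finset.univ.filter fun σ : Equiv.Perm (Fin (k+1)) => ccount σ = m).card
      = (Finset.univ.filter fun e : Equiv.Perm (Fin k) => ccount e + 1 = m).card
        + k * (Finset.univ.filter fun e : Equiv.Perm (Fin k) => ccount e = m).card := by
  rw [Finset.card_filter]
  rw [← Fintype.sum_equiv (Equiv.Perm.decomposeFin (n := k)).symm
      (fun pe : Fin (k+1) × Equiv.Perm (Fin k) =>
        if ccount pe.2 + (if pe.1 = 0 then 1 else 0) = m then (1:ℕ) else 0)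
      (fun σ => if ccount σ = m then (1:ℕ) else 0)
      (fun pe => by rw [show Equiv.Perm.decomposeFin.symm pe
        = Equiv.Perm.decomposeFin.symm (pe.1, pe.2) from rfl, ccount_decompose])]
  rw [Fintype.sum_prod_type, Fin.sum_univ_succ]
  simp only [if_pos rfl, Fin.succ_ne_zero, if_false, ite_false, add_zero]
  rw [Finset.card_filter, Finset.card_filter, Finset.sum_const, Finset.card_univ,
    Fintype.card_fin, smul_eq_mul]
  simp

def rlstat {k : ℕ} (σ : Equiv.Perm (Fin k)) : ℕ :=
  (Finset.univ.filter fun j => ∀ l, j < l → σ j < σ l).card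

def insP {k : ℕ} (p : Fin (k + 1)) (e : Equiv.Perm (Fin k)) : Equiv.Perm (Fin (k + 1)) :=
  (finSuccEquiv' p).trans (e.optionCongr.trans (finSuccEquiv' (Fin.last k)).symm)

def delP {k : ℕ} (p : Fin (k + 1)) (σ : Equiv.Perm (Fin (k + 1))) : Equiv.Perm (Fin k) :=
  Equiv.removeNone (((finSuccEquiv' p).symm.trans σ).trans (finSuccEquiv' (Fin.last k)))

lemma insP_apply_self {k : ℕ} (p : Fin (k + 1)) (e : Equiv.Perm (Fin k)) :
    insP p e p = Fin.last k := by
  simp [insP, finSuccEquiv'_at, Equiv.optionCongr, finSuccEquiv'_symm_none]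

lemma insP_apply_succAbove {k : ℕ} (p : Fin (k + 1)) (e : Equiv.Perm (Fin k)) (x : Fin k) :
    insP p e (p.succAbove x) = (e x).castSucc := by
  simp only [insP, Equiv.trans_apply, finSuccEquiv'_succAbove]
  rw [show (Equiv.optionCongr e) (some x) = some (e x) from rfl, finSuccEquiv'_symm_some,
    Fin.succAbove_last]

lemma delP_spec {k : ℕ} {p : Fin (k + 1)} {σ : Equiv.Perm (Fin (k + 1))}
    (hσ : σ p = Fin.last k) (x : Fin k) :
    Fin.castSucc (delP p σ x) = σ (p.succAbove x) := by
  have hne : σ (p.succAbove x) ≠ Fin.last k := by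
    rw [← hσ]
    exact fun h => Fin.succAbove_ne p x (σ.injective h)
  obtain ⟨z, hz⟩ := Fin.exists_succAbove_eq hne
  have hz' : Fin.castSucc z = σ (p.succAbove x) := by rw [← hz, Fin.succAbove_last]
  have h1 : (((finSuccEquiv' p).symm.trans σ).trans (finSuccEquiv' (Fin.last k)))
      (some x) = some z := by
    simp only [Equiv.trans_apply, finSuccEquiv'_symm_some]
    rw [show σ (p.succAbove x) = σ (p.succAbove x) from rfl, ← hz, finSuccEquiv'_succAbove]
  have h2 := Equiv.removeNone_some (e := ((finSuccEquiv' p).symm.trans σ).trans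
      (finSuccEquiv' (Fin.last k))) (x := x) ⟨z, h1⟩
  rw [h1] at h2
  rw [show delP p σ x = z from Option.some_injective _ h2, hz']

lemma insP_delP {k : ℕ} {p : Fin (k + 1)} {σ : Equiv.Perm (Fin (k + 1))}
    (hσ : σ p = Fin.last k) : insP p (delP p σ) = σ := by
  apply Equiv.ext
  intro j
  rcases eq_or_ne j p with rfl | hj
  · rw [insP_apply_self, hσ]
  · obtain ⟨x, rfl⟩ := Fin.exists_succAbove_eq hj
    rw [insP_apply_succAbove, delP_spec hσ]

lemma delP_insP {k : ℕ} (p : Fin (k + 1)) (e : Equiv.Perm (Fin k)) :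
    delP p (insP p e) = e := by
  apply Equiv.ext
  intro x
  have h := delP_spec (insP_apply_self p e) x
  rw [insP_apply_succAbove] at h
  exact Fin.castSucc_injective k h

def insEquiv (k : ℕ) : (Fin (k + 1) × Equiv.Perm (Fin k)) ≃ Equiv.Perm (Fin (k + 1)) where
  toFun pe := insP pe.1 pe.2
  invFun σ := (σ⁻¹ (Fin.last k), delP (σ⁻¹ (Fin.last k)) σ)
  left_inv := by
    rintro ⟨p, e⟩
    have h1 : (insP p e)⁻¹ (Fin.last k) = p := by
      rw [Equiv.Perm.inv_eq_iff_eq, insP_apply_self]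
    simp only [h1, delP_insP]
  right_inv := by
    intro σ
    exact insP_delP ((by simp : σ (σ⁻¹ (Fin.last k)) = Fin.last k))

lemma rlstat_insP {k : ℕ} (p : Fin (k + 1)) (e : Equiv.Perm (Fin k)) :
    rlstat (insP p e) = rlstat e + (if p = Fin.last k then 1 else 0) := by
  set σ := insP p e with hσdef
  have hσp : σ p = Fin.last k := insP_apply_self p e
  have hσs : ∀ x, σ (p.succAbove x) = (e x).castSucc := insP_apply_succAbove p e
  rw [rlstat, Finset.card_filter, Fin.sum_univ_succAbove _ p]
  have hterm : (if (∀ l, p < l → σ p < σ l) then (1:ℕ) else 0)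
      = if p = Fin.last k then 1 else 0 := by
    rcases eq_or_ne p (Fin.last k) with hp | hp
    · rw [if_pos hp, if_pos]
      intro l hl
      exact absurd (hp ▸ hl) (not_lt.mpr (Fin.le_last l))
    · rw [if_neg hp, if_neg]
      intro hall
      have := hall (Fin.last k) (Fin.lt_last_iff_ne_last.mpr hp)
      rw [hσp] at this
      exact absurd this (not_lt.mpr (Fin.le_last _))
  rw [hterm]
  have hcongr : ∀ x : Fin k, (if (∀ l, p.succAbove x < l → σ (p.succAbove x) < σ l)
      then (1:ℕ) else 0) = if (∀ y, x < y → e x < e y) then 1 else 0 := by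
    intro x
    congr 1
    apply propext
    constructor
    · intro h y hy
      have := h (p.succAbove y) (Fin.succAbove_lt_succAbove_iff.mpr hy)
      rw [hσs, hσs] at this
      exact Fin.castSucc_lt_castSucc_iff.mp this
    · intro h l hl
      rcases eq_or_ne l p with rfl | hlp
      · rw [hσp, hσs]
        exact Fin.castSucc_lt_last _
      · obtain ⟨y, rfl⟩ := Fin.exists_succAbove_eq hlp
        rw [hσs, hσs]
        exact Fin.castSucc_lt_castSucc_iff.mpr (h y (Fin.succAbove_lt_succAbove_iff.mp hl))
  rw [Finset.sum_congr rfl (fun x _ => hcongr x), add_comm, rlstat, Finset.card_filter]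

lemma al_succ (k m : ℕ) :
    (Finset.univ.filter fun σ : Equiv.Perm (Fin (k+1)) => rlstat σ = m).card
      = (Finset.univ.filter fun e : Equiv.Perm (Fin k) => rlstat e + 1 = m).card
        + k * (Finset.univ.filter fun e : Equiv.Perm (Fin k) => rlstat e = m).card := by
  rw [Finset.card_filter]
  rw [← Fintype.sum_equiv (insEquiv k)
      (fun pe : Fin (k+1) × Equiv.Perm (Fin k) =>
        if rlstat pe.2 + (if pe.1 = Fin.last k then 1 else 0) = m then (1:ℕ) else 0)
      (fun σ => if rlstat σ = m then (1:ℕ) else 0)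
      (fun pe => by
        show (if (rlstat pe.2 + if pe.1 = Fin.last k then 1 else 0) = m then (1:ℕ) else 0)
          = if rlstat ((insEquiv k) pe) = m then 1 else 0
        rw [show rlstat ((insEquiv k) pe) = rlstat (insP pe.1 pe.2) from rfl, rlstat_insP])]
  rw [Fintype.sum_prod_type, Fin.sum_univ_castSucc]
  have hne : ∀ x : Fin k, (Fin.castSucc x = Fin.last k) = False := by
    intro x
    simp [Fin.ne_of_lt (Fin.castSucc_lt_last x)]
  simp only [if_pos rfl, hne, if_false, ite_false, add_zero]
  rw [Finset.card_filter, Finset.card_filter, Finset.sum_const, Finset.card_univ,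
    Fintype.card_fin, smul_eq_mul]
  simp [add_comm]

lemma al_eq_cp : ∀ k m : ℕ,
    (Finset.univ.filter fun σ : Equiv.Perm (Fin k) => rlstat σ = m).card
      = (Finset.univ.filter fun σ : Equiv.Perm (Fin k) => ccount σ = m).card := by
  intro k
  induction k with
  | zero =>
    intro m
    have h1 : rlstat (1 : Equiv.Perm (Fin 0)) = 0 := by
      rw [rlstat]
      simp
    have h2 : ccount (1 : Equiv.Perm (Fin 0)) = 0 := by
      rw [ccount]
      simp
    have hu : (Finset.univ : Finset (Equiv.Perm (Fin 0))) = {1} := by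
      apply Finset.eq_singleton_iff_unique_mem.mpr
      exact ⟨Finset.mem_univ _, fun σ _ => Subsingleton.elim σ 1⟩
    rw [hu]
    rw [Finset.filter_singleton, Finset.filter_singleton, h1, h2]
  | succ k ih =>
    intro m
    rw [al_succ, cp_succ, ih m]
    congr 1
    cases m with
    | zero =>
      simp
    | succ m' =>
      have : ∀ e : Equiv.Perm (Fin k), (rlstat e + 1 = m' + 1) = (rlstat e = m') := by
        intro e; simp
      have h2 : ∀ e : Equiv.Perm (Fin k), (ccount e + 1 = m' + 1) = (ccount e = m') := by
        intro e; simp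
      simp only [this, h2]
      exact ih m'

def nstat {k : ℕ} (σ : Equiv.Perm (Fin k)) : ℕ :=
  (Finset.univ.filter fun j : Fin k => ∃ l, j < l ∧ σ l < σ j).card

lemma nstat_add_rlstat {k : ℕ} (σ : Equiv.Perm (Fin k)) : nstat σ + rlstat σ = k := by
  rw [nstat, rlstat]
  have : (Finset.univ.filter fun j : Fin k => ∀ l, j < l → σ j < σ l)
      = Finset.univ.filter fun j : Fin k => ¬ ∃ l, j < l ∧ σ l < σ j := by
    apply Finset.filter_congr
    intro j _
    simp only [not_exists, not_and, not_lt]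
    constructor
    · intro h l hl
      exact le_of_lt (h l hl)
    · intro h l hl
      refine lt_of_le_of_ne (h l hl) ?_
      intro heq
      exact (ne_of_lt hl) (σ.injective heq)
  rw [this, Finset.card_filter_add_card_filter_not, Finset.card_univ, Fintype.card_fin]

lemma nstat_count_eq {k i : ℕ} (hik : i ≤ k) :
    (Finset.univ.filter fun σ : Equiv.Perm (Fin k) => nstat σ = i).card
      = (Finset.univ.filter fun σ : Equiv.Perm (Fin k) => ccount σ = k - i).card := by
  rw [← al_eq_cp]
  congr 1
  apply Finset.filter_congr
  intro σ _
  have := nstat_add_rlstat σ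
  constructor
  · intro h; omega
  · intro h; omega

-- === partition machinery ===
section PartitionCount

variable {n k : ℕ}

lemma min_injOn {P : Finset (Finset (Fin n))} (hP : IsPartitionOf n P) :
    ∀ b ∈ P, ∀ c ∈ P, b.min = c.min → b = c := by
  intro b hb c hc h
  by_contra hne
  have hbne : b.Nonempty := hP.1 b hb
  have hcne : c.Nonempty := hP.1 c hc
  have h' : b.min' hbne = c.min' hcne := by
    have hb' := Finset.coe_min' hbne
    have hc' := Finset.coe_min' hcne
    rw [← hb', ← hc'] at h
    exact_mod_cast h
  have hdisj := hP.2.1 b hb c hc hne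
  exact Finset.disjoint_left.mp hdisj (Finset.min'_mem b hbne)
    (h' ▸ Finset.min'_mem c hcne)

lemma Qcard {P : Finset (Finset (Fin n))} (hP : IsPartitionOf n P) (hPk : P.card = k) :
    (P.image Finset.min).card = k := by
  rw [Finset.card_image_of_injOn (fun b hb c hc h => min_injOn hP b hb c hc h), hPk]

noncomputable def mOrd {P : Finset (Finset (Fin n))} (hP : IsPartitionOf n P)
    (hPk : P.card = k) : Fin k ≃o {x // x ∈ P.image Finset.min} :=
  Finset.orderIsoOfFin _ (Qcard hP hPk)

lemma blk_exu {P : Finset (Finset (Fin n))} (hP : IsPartitionOf n P) (hPk : P.card = k)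
    (q : Fin k) : ∃! b, b ∈ P ∧ b.min = (mOrd hP hPk q : WithTop (Fin n)) := by
  have hmem : (mOrd hP hPk q : WithTop (Fin n)) ∈ P.image Finset.min := (mOrd hP hPk q).2
  obtain ⟨b, hb, hbm⟩ := Finset.mem_image.mp hmem
  exact ⟨b, ⟨hb, hbm⟩, fun c ⟨hc, hcm⟩ => min_injOn hP c hc b hb (hcm.trans hbm.symm)⟩

noncomputable def blk {P : Finset (Finset (Fin n))} (hP : IsPartitionOf n P)
    (hPk : P.card = k) (q : Fin k) : Finset (Fin n) :=
  P.choose (fun b => b.min = (mOrd hP hPk q : WithTop (Fin n))) (blk_exu hP hPk q)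

lemma blk_mem {P : Finset (Finset (Fin n))} (hP : IsPartitionOf n P) (hPk : P.card = k)
    (q : Fin k) : blk hP hPk q ∈ P := by
  unfold blk; exact Finset.choose_mem _ P (blk_exu hP hPk q)

lemma blk_min {P : Finset (Finset (Fin n))} (hP : IsPartitionOf n P) (hPk : P.card = k)
    (q : Fin k) : (blk hP hPk q).min = (mOrd hP hPk q : WithTop (Fin n)) := by
  unfold blk; exact Finset.choose_property _ P (blk_exu hP hPk q)

lemma blk_min_lt_iff {P : Finset (Finset (Fin n))} (hP : IsPartitionOf n P) (hPk : P.card = k)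
    (q q' : Fin k) : (blk hP hPk q).min < (blk hP hPk q').min ↔ q < q' := by
  rw [blk_min, blk_min, Subtype.coe_lt_coe]
  exact (mOrd hP hPk).lt_iff_lt

lemma blk_inj {P : Finset (Finset (Fin n))} (hP : IsPartitionOf n P) (hPk : P.card = k)
    {q q' : Fin k} (h : blk hP hPk q = blk hP hPk q') : q = q' := by
  have := blk_min hP hPk q
  rw [h, blk_min hP hPk q'] at this
  exact ((mOrd hP hPk).injective (Subtype.ext this)).symm

lemma blk_surj {P : Finset (Finset (Fin n))} (hP : IsPartitionOf n P) (hPk : P.card = k)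
    {b : Finset (Fin n)} (hb : b ∈ P) : ∃ q, blk hP hPk q = b := by
  have hmem : b.min ∈ P.image Finset.min := Finset.mem_image_of_mem _ hb
  refine ⟨(mOrd hP hPk).symm ⟨b.min, hmem⟩, ?_⟩
  apply min_injOn hP _ (blk_mem hP hPk _) _ hb
  rw [blk_min, (mOrd hP hPk).apply_symm_apply]

lemma nsb_blk {P : Finset (Finset (Fin n))} (hP : IsPartitionOf n P) (hPk : P.card = k)
    (σ : Equiv.Perm (Fin k)) : nsbOSP (fun j => blk hP hPk (σ j)) = nstat σ := by
  rw [nsbOSP, nstat]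
  congr 1
  apply Finset.filter_congr
  intro j _
  constructor
  · rintro ⟨l, hl, hlt⟩
    exact ⟨l, hl, (blk_min_lt_iff hP hPk _ _).mp hlt⟩
  · rintro ⟨l, hl, hlt⟩
    exact ⟨l, hl, (blk_min_lt_iff hP hPk _ _).mpr hlt⟩

lemma osp_blk {P : Finset (Finset (Fin n))} (hP : IsPartitionOf n P) (hPk : P.card = k)
    (σ : Equiv.Perm (Fin k)) : IsOrderedSetPartition n k (fun j => blk hP hPk (σ j)) := by
  refine ⟨fun j => hP.1 _ (blk_mem hP hPk _), fun j l hjl => ?_, fun x => ?_⟩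
  · apply hP.2.1 _ (blk_mem hP hPk _) _ (blk_mem hP hPk _)
    intro h
    exact hjl (σ.injective (blk_inj hP hPk h))
  · obtain ⟨b, hb, hxb⟩ := hP.2.2 x
    obtain ⟨q, hq⟩ := blk_surj hP hPk hb
    refine ⟨σ.symm q, ?_⟩
    show x ∈ blk hP hPk (σ (σ.symm q))
    rw [σ.apply_symm_apply, hq]
    exact hxb

lemma osp_count (n k i : ℕ) :
    Nat.card {B : Fin k → Finset (Fin n) // IsOrderedSetPartition n k B ∧ nsbOSP B = i}
      = Nat.card {P : Finset (Finset (Fin n)) // IsPartitionOf n P ∧ P.card = k}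
        * Nat.card {σ : Equiv.Perm (Fin k) // nstat σ = i} := by
  rw [← Nat.card_prod]
  apply Nat.card_congr
  symm
  refine Equiv.ofBijective (fun Pσ =>
    ⟨fun j => blk Pσ.1.2.1 Pσ.1.2.2 (Pσ.2.1 j),
     osp_blk Pσ.1.2.1 Pσ.1.2.2 Pσ.2.1,
     by rw [nsb_blk Pσ.1.2.1 Pσ.1.2.2 Pσ.2.1]; exact Pσ.2.2⟩) ⟨?_, ?_⟩
  · -- injective
    rintro ⟨⟨P, hP, hPk⟩, ⟨σ, hσ⟩⟩ ⟨⟨P', hP', hPk'⟩, ⟨σ', hσ'⟩⟩ h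
    have hB := congrArg Subtype.val h
    simp only at hB
    have hPP : P = P' := by
      ext b
      constructor
      · intro hb
        obtain ⟨q, hq⟩ := blk_surj hP hPk hb
        have := congrFun hB (σ.symm q)
        rw [show σ (σ.symm q) = q from σ.apply_symm_apply q, hq] at this
        rw [this]
        exact blk_mem hP' hPk' _
      · intro hb
        obtain ⟨q, hq⟩ := blk_surj hP' hPk' hb
        have := congrFun hB (σ'.symm q)
        rw [show σ' (σ'.symm q) = q from σ'.apply_symm_apply q, hq] at this
        rw [← this]
        exact blk_mem hP hPk _
    subst hPP
    have hσσ : σ = σ' := by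
      apply Equiv.ext
      intro j
      exact blk_inj hP hPk (congrFun hB j)
    subst hσσ
    rfl
  · -- surjective
    rintro ⟨B, hB, hnsb⟩
    set P := Finset.univ.image B with hPdef
    have hBinj : Function.Injective B := by
      intro j l hjl
      by_contra hne
      have := hB.2.1 j l hne
      rw [hjl, disjoint_self] at this
      exact (hB.1 l).ne_empty (by simpa using this)
    have hP : IsPartitionOf n P := by
      refine ⟨fun b hb => ?_, fun b hb c hc hbc => ?_, fun x => ?_⟩
      · obtain ⟨j, _, rfl⟩ := Finset.mem_image.mp hb
        exact hB.1 j
      · obtain ⟨j, _, rfl⟩ := Finset.mem_image.mp hb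
        obtain ⟨l, _, rfl⟩ := Finset.mem_image.mp hc
        exact hB.2.1 j l (fun h => hbc (h ▸ rfl))
      · obtain ⟨j, hj⟩ := hB.2.2 x
        exact ⟨B j, Finset.mem_image_of_mem B (Finset.mem_univ j), hj⟩
    have hPk : P.card = k := by
      rw [hPdef, Finset.card_image_of_injective _ hBinj, Finset.card_univ, Fintype.card_fin]
    -- the permutation
    have hmem : ∀ j, (B j).min ∈ P.image Finset.min :=
      fun j => Finset.mem_image_of_mem _ (Finset.mem_image_of_mem B (Finset.mem_univ j))
    set s : Fin k → Fin k := fun j => (mOrd hP hPk).symm ⟨(B j).min, hmem j⟩ with hsdef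
    have hsinj : Function.Injective s := by
      intro j l hjl
      have : (B j).min = (B l).min := by
        have := congrArg (fun z => ((mOrd hP hPk) z : WithTop (Fin n))) hjl
        simpa only [hsdef, OrderIso.apply_symm_apply] using this
      exact hBinj (min_injOn hP _ (Finset.mem_image_of_mem B (Finset.mem_univ j))
        _ (Finset.mem_image_of_mem B (Finset.mem_univ l)) this)
    set σ : Equiv.Perm (Fin k) := Equiv.ofBijective s
      (Finite.injective_iff_bijective.mp hsinj) with hσdef
    have hblkσ : ∀ j, blk hP hPk (σ j) = B j := by
      intro j
      apply min_injOn hP _ (blk_mem hP hPk _) _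
        (Finset.mem_image_of_mem B (Finset.mem_univ j))
      rw [blk_min]
      have : σ j = s j := rfl
      rw [this, hsdef]
      simp only []
      rw [(mOrd hP hPk).apply_symm_apply]
    have hnst : nstat σ = i := by
      rw [← hnsb, ← nsb_blk hP hPk σ]
      congr 1
      funext j
      rw [hblkσ j]
    refine ⟨⟨⟨P, hP, hPk⟩, ⟨σ, hnst⟩⟩, ?_⟩
    apply Subtype.ext
    funext j
    exact hblkσ j

end PartitionCount
end Aux

/-- For `1 ≤ k ≤ n` and `0 ≤ i ≤ k-1`, the number of ordered set
partitions of `[n]` into `k` nonempty blocks with `nsb = i` equals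
`S(n,k) * c(k, k-i)`. -/
theorem ordered_set_partition_nsb_count (n k i : ℕ) (hk : 1 ≤ k) (hkn : k ≤ n)
    (hi : i ≤ k - 1) :
    Set.ncard {B : Fin k → Finset (Fin n) | IsOrderedSetPartition n k B ∧ nsbOSP B = i} =
      stirlingSecond n k * stirlingFirst k (k - i) := by
  have hik : i ≤ k := by omega
  have e1 : Set.ncard {B : Fin k → Finset (Fin n) | IsOrderedSetPartition n k B ∧ nsbOSP B = i}
      = Nat.card {B : Fin k → Finset (Fin n) // IsOrderedSetPartition n k B ∧ nsbOSP B = i} :=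
    (Nat.card_coe_set_eq _).symm
  have e2 : stirlingSecond n k
      = Nat.card {P : Finset (Finset (Fin n)) // IsPartitionOf n P ∧ P.card = k} :=
    (Nat.card_coe_set_eq _).symm
  have e3 : Nat.card {σ : Equiv.Perm (Fin k) // nstat σ = i}
      = (Finset.univ.filter fun σ : Equiv.Perm (Fin k) => nstat σ = i).card := by
    rw [Nat.card_eq_fintype_card, Fintype.card_subtype]
  have e4 : stirlingFirst k (k - i)
      = (Finset.univ.filter fun σ : Equiv.Perm (Fin k) => ccount σ = k - i).card := by
    rw [stirlingFirst, Set.ncard_eq_toFinset_card', Set.toFinset_setOf]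
    simp only [show (fun σ : Equiv.Perm (Fin k) => cycleCount σ = k - i)
      = (fun σ : Equiv.Perm (Fin k) => ccount σ = k - i) from rfl]
  rw [e1, osp_count n k i, ← e2, e3, nstat_count_eq hik, ← e4]
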